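/- Let m, n be coprime odd positive integers and q an integer. Define G(χ_n, q) = ((1-i)/2 + (-1|n)(1+i)/2)·Σ_{j mod n} (j|n) e(jq/n). Then G(χ_{mn}, q) = G(χ_m, q)·G(χ_n, q). -/

import Mathlib

/-- The normalized quadratic Gauss sum `G(χ_n, q)`. -/
noncomputable def Gsum (n : ℕ) (q : ℤ) : ℂ :=
  ((1 - Complex.I) / 2 + (jacobiSym (-1 : ℤ) n : ℂ) * (1 + Complex.I) / 2) *
    ∑ j ∈ Finset.range n, (jacobiSym (j : ℤ) n : ℂ) *
      Complex.exp (2 * Real.pi * Complex.I * (j : ℂ) * (q : ℂ) / (n : ℂ))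

open Finset

/-- The exponential term `e(j q / n)`. -/
noncomputable def Eterm (n : ℕ) (q : ℤ) (j : ℕ) : ℂ :=
  Complex.exp (2 * Real.pi * Complex.I * (j : ℂ) * (q : ℂ) / (n : ℂ))

lemma Eterm_add_mul (n : ℕ) (hn : n ≠ 0) (q : ℤ) (r d : ℕ) :
    Eterm n q (r + n * d) = Eterm n q r := by
  have hn' : (n : ℂ) ≠ 0 := Nat.cast_ne_zero.mpr hn
  unfold Eterm
  have h : 2 * (Real.pi : ℂ) * Complex.I * ((r + n * d : ℕ) : ℂ) * q / n
      = 2 * (Real.pi : ℂ) * Complex.I * (r : ℂ) * q / n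
        + (((d : ℤ) * q : ℤ) : ℂ) * (2 * (Real.pi : ℂ) * Complex.I) := by
    push_cast
    field_simp
  rw [h, Complex.exp_add, Complex.exp_int_mul_two_pi_mul_I, mul_one]

lemma Eterm_mod (n : ℕ) (hn : n ≠ 0) (q : ℤ) (k : ℕ) :
    Eterm n q (k % n) = Eterm n q k := by
  conv_rhs => rw [← Nat.mod_add_div k n]
  exact (Eterm_add_mul n hn q (k % n) (k / n)).symm

lemma Eterm_split (m n : ℕ) (hm : m ≠ 0) (hn : n ≠ 0) (q : ℤ) (a b : ℕ) :
    Eterm (m * n) q (a * n + b * m) = Eterm m q a * Eterm n q b := by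
  have hm' : (m : ℂ) ≠ 0 := Nat.cast_ne_zero.mpr hm
  have hn' : (n : ℂ) ≠ 0 := Nat.cast_ne_zero.mpr hn
  unfold Eterm
  rw [← Complex.exp_add]
  congr 1
  push_cast
  field_simp

lemma sum_mul_key (m n : ℕ) (hmpos : 0 < m) (hnpos : 0 < n)
    (hco : Nat.Coprime m n) (q : ℤ) :
    (∑ j ∈ Finset.range (m * n), (jacobiSym (j : ℤ) (m * n) : ℂ) * Eterm (m * n) q j)
      = ((jacobiSym (n : ℤ) m * jacobiSym (m : ℤ) n : ℤ) : ℂ) *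
        ((∑ j ∈ Finset.range m, (jacobiSym (j : ℤ) m : ℂ) * Eterm m q j) *
         (∑ j ∈ Finset.range n, (jacobiSym (j : ℤ) n : ℂ) * Eterm n q j)) := by
  haveI : NeZero m := ⟨hmpos.ne'⟩
  haveI : NeZero n := ⟨hnpos.ne'⟩
  have hmaps : ∀ p ∈ (Finset.range m ×ˢ Finset.range n),
      (p.1 * n + p.2 * m) % (m * n) ∈ Finset.range (m * n) := by
    rintro ⟨a, b⟩ -
    simp only [Finset.mem_range]
    exact Nat.mod_lt _ (Nat.mul_pos hmpos hnpos)
  have hinj : Set.InjOn (fun p : ℕ × ℕ => (p.1 * n + p.2 * m) % (m * n))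
      ↑(Finset.range m ×ˢ Finset.range n) := by
    rintro ⟨a, b⟩ hab ⟨a', b'⟩ hab' h
    simp only [Finset.coe_product, Set.mem_prod, Set.mem_setOf_eq, Finset.mem_coe,
      Finset.mem_range] at hab hab'
    simp only at h
    have hmod : (a * n + b * m) ≡ (a' * n + b' * m) [MOD m * n] := h
    have hzm : ((a : ZMod m)) = (a' : ZMod m) := by
      have h1 : ((a * n + b * m : ℕ) : ZMod m) = ((a' * n + b' * m : ℕ) : ZMod m) := by
        have h2 := congrArg (ZMod.castHom (dvd_mul_right m n) (ZMod m))
          ((ZMod.natCast_eq_natCast_iff _ _ _).mpr hmod)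
        rwa [map_natCast, map_natCast] at h2
      push_cast at h1
      simp only [ZMod.natCast_self, mul_zero, add_zero, zero_add] at h1
      have hu : IsUnit (n : ZMod m) := (ZMod.isUnit_iff_coprime n m).mpr hco.symm
      exact hu.mul_right_cancel h1
    have hzn : ((b : ZMod n)) = (b' : ZMod n) := by
      have h1 : ((a * n + b * m : ℕ) : ZMod n) = ((a' * n + b' * m : ℕ) : ZMod n) := by
        have h2 := congrArg (ZMod.castHom (dvd_mul_left n m) (ZMod n))
          ((ZMod.natCast_eq_natCast_iff _ _ _).mpr hmod)
        rwa [map_natCast, map_natCast] at h2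
      push_cast at h1
      simp only [ZMod.natCast_self, mul_zero, add_zero, zero_add] at h1
      have hu : IsUnit (m : ZMod n) := (ZMod.isUnit_iff_coprime m n).mpr hco
      exact hu.mul_right_cancel h1
    have ha : a = a' := by
      have h3 := (ZMod.natCast_eq_natCast_iff _ _ _).mp hzm
      rwa [Nat.ModEq, Nat.mod_eq_of_lt hab.1, Nat.mod_eq_of_lt hab'.1] at h3
    have hb : b = b' := by
      have h3 := (ZMod.natCast_eq_natCast_iff _ _ _).mp hzn
      rwa [Nat.ModEq, Nat.mod_eq_of_lt hab.2, Nat.mod_eq_of_lt hab'.2] at h3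
    exact Prod.ext ha hb
  have hsurj : Set.SurjOn (fun p : ℕ × ℕ => (p.1 * n + p.2 * m) % (m * n))
      ↑(Finset.range m ×ˢ Finset.range n) ↑(Finset.range (m * n)) := by
    intro j hj
    have hcard : (Finset.range (m * n)).card ≤ ((Finset.range m) ×ˢ (Finset.range n)).card := by
      simp
    obtain ⟨p, hp, hpe⟩ := Finset.surj_on_of_inj_on_of_card_le
      (fun (p : ℕ × ℕ) (_ : p ∈ Finset.range m ×ˢ Finset.range n) => (p.1 * n + p.2 * m) % (m * n))
      (fun p hp => hmaps p hp)
      (fun p p' hp hp' h => hinj (Finset.mem_coe.mpr hp) (Finset.mem_coe.mpr hp') h)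
      hcard j (Finset.mem_coe.mp hj)
    exact ⟨p, Finset.mem_coe.mpr hp, hpe.symm⟩
  rw [Finset.sum_mul_sum, ← Finset.sum_product', Finset.mul_sum]
  symm
  refine Finset.sum_nbij (fun p => (p.1 * n + p.2 * m) % (m * n)) hmaps hinj hsurj ?_
  rintro ⟨a, b⟩ hab
  simp only
  set j := (a * n + b * m) % (m * n) with hj
  have hjac : (jacobiSym (j : ℤ) (m * n)) =
      jacobiSym (a : ℤ) m * jacobiSym (n : ℤ) m *
        (jacobiSym (b : ℤ) n * jacobiSym (m : ℤ) n) := by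
    have h1 : jacobiSym (j : ℤ) (m * n) = jacobiSym ((a : ℤ) * n + (b : ℤ) * m) (m * n) := by
      apply jacobiSym.mod_left'
      rw [hj]
      push_cast [Int.natCast_mod]
      exact Int.emod_emod_of_dvd _ dvd_rfl
    rw [h1, jacobiSym.mul_right]
    congr 1
    · rw [jacobiSym.mod_left' (show ((a : ℤ) * n + (b : ℤ) * m) % m = ((a : ℤ) * n) % m from
        Int.add_mul_emod_self_right ..), jacobiSym.mul_left]
    · rw [jacobiSym.mod_left' (show ((a : ℤ) * n + (b : ℤ) * m) % n = ((b : ℤ) * m) % n by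
        rw [add_comm]; exact Int.add_mul_emod_self_right ..), jacobiSym.mul_left]
  have hE : Eterm (m * n) q j = Eterm m q a * Eterm n q b := by
    rw [hj, Eterm_mod _ (Nat.mul_pos hmpos hnpos).ne' q,
      Eterm_split m n hmpos.ne' hnpos.ne' q a b]
  rw [hjac, hE]
  push_cast
  ring

theorem stmt1' (m n : ℕ) (hm : Odd m) (hn : Odd n) (hmpos : 0 < m) (hnpos : 0 < n)
    (hco : Nat.Coprime m n) (q : ℤ) :
    (((1 - Complex.I) / 2 + (jacobiSym (-1 : ℤ) (m * n) : ℂ) * (1 + Complex.I) / 2) *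
      ∑ j ∈ Finset.range (m * n), (jacobiSym (j : ℤ) (m * n) : ℂ) * Eterm (m * n) q j)
    = (((1 - Complex.I) / 2 + (jacobiSym (-1 : ℤ) m : ℂ) * (1 + Complex.I) / 2) *
        ∑ j ∈ Finset.range m, (jacobiSym (j : ℤ) m : ℂ) * Eterm m q j) *
      (((1 - Complex.I) / 2 + (jacobiSym (-1 : ℤ) n : ℂ) * (1 + Complex.I) / 2) *
        ∑ j ∈ Finset.range n, (jacobiSym (j : ℤ) n : ℂ) * Eterm n q j) := by
  haveI : NeZero m := ⟨hmpos.ne'⟩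
  haveI : NeZero n := ⟨hnpos.ne'⟩
  have hgnm : (n : ℤ).gcd m = 1 := by
    rw [Int.gcd_natCast_natCast]; exact hco.symm
  rw [sum_mul_key m n hmpos hnpos hco q]
  have ham : jacobiSym (-1 : ℤ) m = (-1) ^ (m / 2) := by
    rw [jacobiSym.at_neg_one hm, ZMod.χ₄_eq_neg_one_pow (Nat.odd_iff.mp hm)]
  have han : jacobiSym (-1 : ℤ) n = (-1) ^ (n / 2) := by
    rw [jacobiSym.at_neg_one hn, ZMod.χ₄_eq_neg_one_pow (Nat.odd_iff.mp hn)]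
  have hamn : jacobiSym (-1 : ℤ) (m * n) = (-1) ^ (m / 2) * (-1) ^ (n / 2) := by
    rw [jacobiSym.mul_right, ham, han]
  have hs : jacobiSym (n : ℤ) m * jacobiSym (m : ℤ) n = (-1 : ℤ) ^ (m / 2 * (n / 2)) := by
    rw [jacobiSym.quadratic_reciprocity hm hn]
    have : jacobiSym (n : ℤ) m * ((-1 : ℤ) ^ (m / 2 * (n / 2)) * jacobiSym (n : ℤ) m)
        = (-1 : ℤ) ^ (m / 2 * (n / 2)) * jacobiSym (n : ℤ) m ^ 2 := by ring
    rw [this, jacobiSym.sq_one hgnm, mul_one]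
  rw [hamn, ham, han, hs]
  have key : ∀ x y s : ℤ, x = (-1) ^ (m / 2) → y = (-1) ^ (n / 2) →
      s = (-1 : ℤ) ^ (m / 2 * (n / 2)) →
      ((1 - Complex.I) / 2 + ((x * y : ℤ) : ℂ) * (1 + Complex.I) / 2) * ((s : ℤ) : ℂ)
        = ((1 - Complex.I) / 2 + ((x : ℤ) : ℂ) * (1 + Complex.I) / 2) *
          ((1 - Complex.I) / 2 + ((y : ℤ) : ℂ) * (1 + Complex.I) / 2) := by
    intro x y s hx hy hsv
    rcases Nat.even_or_odd (m / 2) with h1 | h1 <;> rcases Nat.even_or_odd (n / 2) with h2 | h2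
    · rw [hx, hy, hsv, h1.neg_one_pow, h2.neg_one_pow, (h1.mul_right _).neg_one_pow]
      push_cast; ring
    · rw [hx, hy, hsv, h1.neg_one_pow, h2.neg_one_pow, (h1.mul_right _).neg_one_pow]
      push_cast; ring
    · rw [hx, hy, hsv, h1.neg_one_pow, h2.neg_one_pow, (h2.mul_left _).neg_one_pow]
      push_cast; ring
    · rw [hx, hy, hsv, h1.neg_one_pow, h2.neg_one_pow, (h1.mul h2).neg_one_pow]
      push_cast
      ring_nf
      simp [Complex.I_sq]
  have hkey := key ((-1) ^ (m / 2)) ((-1) ^ (n / 2)) ((-1) ^ (m / 2 * (n / 2))) rfl rfl rfl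
  push_cast at hkey ⊢
  linear_combination (∑ j ∈ Finset.range m, (jacobiSym (j : ℤ) m : ℂ) * Eterm m q j) *
    (∑ j ∈ Finset.range n, (jacobiSym (j : ℤ) n : ℂ) * Eterm n q j) * hkey

/-- For coprime odd positive `m, n`, `G(χ_{mn}, q) = G(χ_m, q) G(χ_n, q)`. -/
theorem stmt1 (m n : ℕ) (hm : Odd m) (hn : Odd n) (hmpos : 0 < m) (hnpos : 0 < n)
    (hco : Nat.Coprime m n) (q : ℤ) :
    Gsum (m * n) q = Gsum m q * Gsum n q := by
  have := stmt1' m n hm hn hmpos hnpos hco q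
  simpa only [Gsum, Eterm] using this
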